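/- Suppose there is ē ∈ ℝ with f_ε = 0 on (ē, ∞), f_ε > 0 on (e̲, ē), and f_ε = 0 on (−∞, e̲), where e̲ ∈ [−∞, ē). Let z1 < z2 be such that both posteriors F(·|z1) and F(·|z2) are defined, and suppose μ( (z1 − ē, min(z2 − ē, z1 − e̲)) ) > 0. Then there exists w < z2 − ē with F(w|z1) > 0 = F(w|z2). In particular it is NOT the case that F(w|z1) ≤ F(w|z2) for all w, i.e., the posterior given the lower signal z1 does not (even weakly) first-order stochastically dominate the posterior given the higher signal z2. -/

import Mathlib

open MeasureTheory Set

/-- The posterior cdf of `X` given the signal realization `Z = z`, where the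
prior of `X` is `μ` and the independent noise `ε = Z − X` has Lebesgue
density `fε`. -/
noncomputable def postCdf (μ : Measure ℝ) (fε : ℝ → ℝ) (w z : ℝ) : ℝ :=
  (∫ x in Iic w, fε (z - x) ∂μ) / (∫ x, fε (z - x) ∂μ)

/-- Suppose the noise density `fε` vanishes above `ē ∈ ℝ`, is
positive on `(e̲, ē)` and vanishes below `e̲ ∈ [−∞, ē)`. If `z1 < z2` are
signals at which the posteriors are defined and
`μ((z1 − ē, min(z2 − ē, z1 − e̲))) > 0`, then there exists `w < z2 − ē` with
`F(w|z1) > 0 = F(w|z2)`; in particular the posterior given the lower signal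
`z1` does not even weakly FOSD the posterior given `z2`. -/
theorem stmt_9 (μ : Measure ℝ) [IsProbabilityMeasure μ]
    (fε : ℝ → ℝ) (hmeas : Measurable fε) (hnn : ∀ e, 0 ≤ fε e)
    (hdens : (∫ e, fε e) = 1)
    (ebar : ℝ) (elow : EReal) (hee : elow < (ebar : EReal))
    (h0above : ∀ e : ℝ, ebar < e → fε e = 0)
    (hpos : ∀ e : ℝ, elow < (e : EReal) → e < ebar → 0 < fε e)
    (h0below : ∀ e : ℝ, (e : EReal) < elow → fε e = 0)
    (z1 z2 : ℝ) (hz : z1 < z2)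
    (hint1 : Integrable (fun x => fε (z1 - x)) μ)
    (hint2 : Integrable (fun x => fε (z2 - x)) μ)
    (hden1 : 0 < ∫ x, fε (z1 - x) ∂μ)
    (hden2 : 0 < ∫ x, fε (z2 - x) ∂μ)
    (hμpos : 0 < μ {x : ℝ | z1 - ebar < x ∧
      (x : EReal) < min ((z2 - ebar : ℝ) : EReal) ((z1 : EReal) - elow)}) :
    (∃ w : ℝ, w < z2 - ebar ∧ postCdf μ fε w z2 = 0 ∧ 0 < postCdf μ fε w z1) ∧
    ¬ (∀ w : ℝ, postCdf μ fε w z1 ≤ postCdf μ fε w z2) := by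
  set S : Set ℝ := {x : ℝ | z1 - ebar < x ∧
      (x : EReal) < min ((z2 - ebar : ℝ) : EReal) ((z1 : EReal) - elow)} with hS
  -- every x in S is below z2 - ebar and fε (z1 - x) > 0
  have hSsub : ∀ x ∈ S, x < z2 - ebar := by
    intro x hx
    have := hx.2.trans_le (min_le_left _ _)
    exact_mod_cast this
  have hSpos : ∀ x ∈ S, 0 < fε (z1 - x) := by
    intro x hx
    have h1 : z1 - x < ebar := by linarith [hx.1]
    have h2 : (x : EReal) < (z1 : EReal) - elow := hx.2.trans_le (min_le_right _ _)
    have h3 : elow < ((z1 - x : ℝ) : EReal) := by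
      induction elow with
      | bot => exact (EReal.bot_lt_coe _)
      | coe e =>
          have : (x : EReal) < ((z1 - e : ℝ) : EReal) := by
            rw [show ((z1 - e : ℝ) : EReal) = (z1 : EReal) - (e : EReal) from
              (EReal.coe_sub _ _)]
            exact h2
          have hxe : x < z1 - e := by exact_mod_cast this
          exact_mod_cast (by linarith : e < z1 - x)
      | top => exact absurd hee (by simp)
    exact hpos _ h3 h1
  -- find w < z2 - ebar with μ (S ∩ Iic w) > 0
  obtain ⟨w, hw, hμw⟩ : ∃ w : ℝ, w < z2 - ebar ∧ 0 < μ (S ∩ Iic w) := by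
    by_contra h
    push_neg at h
    have hnull : ∀ n : ℕ, μ (S ∩ Iic (z2 - ebar - 1 / (n + 1))) = 0 := by
      intro n
      have hwlt : z2 - ebar - 1 / (n + 1) < z2 - ebar := by
        have : (0:ℝ) < 1 / (n + 1) := by positivity
        linarith
      exact le_antisymm (h _ hwlt) zero_le
    have hcover : S ⊆ ⋃ n : ℕ, (S ∩ Iic (z2 - ebar - 1 / (n + 1))) := by
      intro x hx
      obtain ⟨n, hn⟩ := exists_nat_one_div_lt (by linarith [hSsub x hx] : (0:ℝ) < z2 - ebar - x)
      exact mem_iUnion.2 ⟨n, hx, by simp only [mem_Iic]; push_cast at hn ⊢; linarith⟩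
    have : μ S = 0 := measure_mono_null hcover (measure_iUnion_null hnull)
    rw [this] at hμpos; exact lt_irrefl _ hμpos
  refine ⟨⟨w, hw, ?_, ?_⟩, ?_⟩
  · -- posterior at z2 is zero: integrand vanishes on Iic w
    have : (∫ x in Iic w, fε (z2 - x) ∂μ) = 0 := by
      apply setIntegral_eq_zero_of_forall_eq_zero
      intro x hx
      exact h0above _ (by simp only [mem_Iic] at hx; linarith)
    simp [postCdf, this]
  · -- posterior at z1 is positive
    have hnum : 0 < ∫ x in Iic w, fε (z1 - x) ∂μ := by
      have hio : IntegrableOn (fun x => fε (z1 - x)) (Iic w) μ := hint1.integrableOn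
      rw [setIntegral_pos_iff_support_of_nonneg_ae
        (Filter.Eventually.of_forall fun x => hnn _) hio]
      refine lt_of_lt_of_le hμw (measure_mono ?_)
      intro x hx
      exact ⟨ne_of_gt (hSpos x hx.1), hx.2⟩
    exact div_pos hnum hden1
  · intro hall
    -- reuse: F(w|z2) = 0 < F(w|z1)
    have h2z : postCdf μ fε w z2 = 0 := by
      have : (∫ x in Iic w, fε (z2 - x) ∂μ) = 0 := by
        apply setIntegral_eq_zero_of_forall_eq_zero
        intro x hx
        exact h0above _ (by simp only [mem_Iic] at hx; linarith)
      simp [postCdf, this]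
    have h1z : 0 < postCdf μ fε w z1 := by
      have hnum : 0 < ∫ x in Iic w, fε (z1 - x) ∂μ := by
        have hio : IntegrableOn (fun x => fε (z1 - x)) (Iic w) μ := hint1.integrableOn
        rw [setIntegral_pos_iff_support_of_nonneg_ae
          (Filter.Eventually.of_forall fun x => hnn _) hio]
        refine lt_of_lt_of_le hμw (measure_mono ?_)
        intro x hx
        exact ⟨ne_of_gt (hSpos x hx.1), hx.2⟩
      exact div_pos hnum hden1
    have := hall w
    rw [h2z] at this
    exact absurd (this.trans_lt h1z) (lt_irrefl _)
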